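/- For a probability distribution (p_i) and density matrices (ρ_i) on a finite-dimensional Hilbert space, the von Neumann entropy satisfies ∑_i p_i S(ρ_i) ≤ S(∑_i p_i ρ_i) ≤ ∑_i p_i S(ρ_i) + H(p), where H(p) is the Shannon entropy of (p_i). -/

import Mathlib

open Matrix BigOperators
open scoped Kronecker ComplexOrder

noncomputable def shannonEntropy {d : ℕ} (p : Fin d → ℝ) : ℝ := ∑ x, Real.negMulLog (p x)

noncomputable def binEnt (x : ℝ) : ℝ := Real.negMulLog x + Real.negMulLog (1 - x)

def IsProb {d : ℕ} (p : Fin d → ℝ) : Prop := (∀ x, 0 ≤ p x) ∧ ∑ x, p x = 1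

def IsDensity {n : Type*} [Fintype n] [DecidableEq n] (ρ : Matrix n n ℂ) : Prop :=
  ρ.PosSemidef ∧ ρ.trace = 1

noncomputable def traceNorm {n : Type*} [Fintype n] [DecidableEq n] (A : Matrix n n ℂ) : ℝ :=
  ∑ i, Real.sqrt ((Matrix.posSemidef_conjTranspose_mul_self A).1.eigenvalues i)

noncomputable def vnEntropy {n : Type*} [Fintype n] [DecidableEq n] (ρ : Matrix n n ℂ) : ℝ :=
  if h : ρ.IsHermitian then ∑ i, Real.negMulLog (h.eigenvalues i) else 0

noncomputable def ptraceA {a b : ℕ} (ρ : Matrix (Fin a × Fin b) (Fin a × Fin b) ℂ) : Matrix (Fin b) (Fin b) ℂ :=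
  Matrix.of fun j j' => ∑ i, ρ (i, j) (i, j')

noncomputable def ptraceB {a b : ℕ} (ρ : Matrix (Fin a × Fin b) (Fin a × Fin b) ℂ) : Matrix (Fin a) (Fin a) ℂ :=
  Matrix.of fun i i' => ∑ j, ρ (i, j) (i', j)

noncomputable def condEnt {a b : ℕ} (ρ : Matrix (Fin a × Fin b) (Fin a × Fin b) ℂ) : ℝ :=
  vnEntropy ρ - vnEntropy (ptraceA ρ)

noncomputable def posPart {n : Type*} [Fintype n] [DecidableEq n] (A : Matrix n n ℂ) : Matrix n n ℂ :=
  if h : A.IsHermitian then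
    (h.eigenvectorUnitary : Matrix n n ℂ) * Matrix.diagonal (fun i => ((max (h.eigenvalues i) 0 : ℝ) : ℂ)) *
      (h.eigenvectorUnitary : Matrix n n ℂ)ᴴ
  else 0

noncomputable def matLog {n : Type*} [Fintype n] [DecidableEq n] (A : Matrix n n ℂ) : Matrix n n ℂ :=
  if h : A.IsHermitian then
    (h.eigenvectorUnitary : Matrix n n ℂ) * Matrix.diagonal (fun i => (Real.log (h.eigenvalues i) : ℂ)) *
      (h.eigenvectorUnitary : Matrix n n ℂ)ᴴ
  else 0

noncomputable def relEnt {n : Type*} [Fintype n] [DecidableEq n] (ρ γ : Matrix n n ℂ) : ℝ :=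
  ((ρ * (matLog ρ - matLog γ)).trace).re

open Classical in
noncomputable def matSqrt {n : Type*} [Fintype n] [DecidableEq n] (A : Matrix n n ℂ) : Matrix n n ℂ :=
  if h : A.PosSemidef then
    (h.1.eigenvectorUnitary : Matrix n n ℂ) * Matrix.diagonal (fun i => ((Real.sqrt (h.1.eigenvalues i) : ℝ) : ℂ)) *
      (star h.1.eigenvectorUnitary : Matrix n n ℂ)
  else 0

noncomputable def fidelity {n : Type*} [Fintype n] [DecidableEq n] (ρ σ : Matrix n n ℂ) : ℝ :=
  traceNorm (matSqrt ρ * matSqrt σ)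

noncomputable def maxEig {n : Type*} [Fintype n] [DecidableEq n] (A : Matrix n n ℂ) : ℝ :=
  if h : A.IsHermitian then ⨆ i, h.eigenvalues i else 0

noncomputable def outer {n : Type*} [Fintype n] (v : n → ℂ) : Matrix n n ℂ :=
  Matrix.vecMulVec v (star v)


-- Jensen for negMulLog with subprobability weights
lemma jensen_nml {ι : Type*} [Fintype ι] (w x : ι → ℝ) (hw : ∀ i, 0 ≤ w i)
    (hw1 : ∑ i, w i ≤ 1) (hx : ∀ i, 0 ≤ x i) :
    ∑ i, w i * Real.negMulLog (x i) ≤ Real.negMulLog (∑ i, w i * x i) := by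
  have h := Real.concaveOn_negMulLog.map_add_sum_le (t := Finset.univ) (w := w) (p := x)
    (q := (0:ℝ)) (v := 1 - ∑ i, w i) (fun i _ => hw i) (by ring)
    (fun i _ => hx i) (by linarith) (le_refl (0:ℝ))
  simpa [Real.negMulLog_zero] using h

lemma psd_smul {n : Type*} [Fintype n] {A : Matrix n n ℂ} (hA : A.PosSemidef)
    {r : ℝ} (hr : 0 ≤ r) : (((r : ℂ)) • A).PosSemidef := by
  constructor
  · have h1 : (((r:ℂ)) • A)ᴴ = star ((r:ℂ)) • Aᴴ := Matrix.conjTranspose_smul _ _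
    rw [Matrix.IsHermitian, h1, hA.1]
    simp [Complex.conj_ofReal]
  · intro x
    exact (hA.smul (by exact_mod_cast hr : (0:ℂ) ≤ (r:ℂ))).2 x

lemma psd_sum {n ι : Type*} [Fintype n] [Fintype ι] (f : ι → Matrix n n ℂ)
    (h : ∀ i, (f i).PosSemidef) : (∑ i, f i).PosSemidef := by
  classical
  refine Finset.sum_induction f _ (fun a b ha hb => ha.add hb) ?_ (fun i _ => h i)
  exact Matrix.PosSemidef.zero

lemma herm_trace {n : Type*} [Fintype n] [DecidableEq n] {A : Matrix n n ℂ}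
    (hA : A.IsHermitian) : A.trace = ∑ i, (hA.eigenvalues i : ℂ) := by
  have h := hA.conjStarAlgAut_star_eigenvectorUnitary
  simp only [Unitary.conjStarAlgAut_apply, Unitary.coe_star, star_star] at h
  have h2 : (star (hA.eigenvectorUnitary : Matrix n n ℂ) * A *
      (hA.eigenvectorUnitary : Matrix n n ℂ)).trace = A.trace := by
    rw [Matrix.trace_mul_cycle]
    
    rw [(Matrix.mem_unitaryGroup_iff.mp hA.eigenvectorUnitary.2)]
    rw [Matrix.one_mul]
  rw [← h2, h, Matrix.trace_diagonal]
  rfl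

lemma sum4_swap {α β γ δ : Type*} [Fintype α] [Fintype β] [Fintype γ] [Fintype δ]
    {M : Type*} [AddCommMonoid M] (f : α → β → γ → δ → M) :
    ∑ a, ∑ b, ∑ c, ∑ e, f a b c e = ∑ c, ∑ e, ∑ a, ∑ b, f a b c e := by
  have h := Finset.sum_comm (s := (Finset.univ : Finset (α × β)))
    (t := (Finset.univ : Finset (γ × δ))) (f := fun x y => f x.1 x.2 y.1 y.2)
  simpa [Fintype.sum_prod_type] using h
set_option maxHeartbeats 1000000 in
theorem stmt_4 {m d : ℕ} (p : Fin m → ℝ) (hp : IsProb p)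
    (ρ : Fin m → Matrix (Fin d) (Fin d) ℂ) (hρ : ∀ i, IsDensity (ρ i)) :
    ∑ i, p i * vnEntropy (ρ i) ≤ vnEntropy (∑ i, p i • ρ i) ∧
    vnEntropy (∑ i, p i • ρ i) ≤ ∑ i, p i * vnEntropy (ρ i) + shannonEntropy p := by
  classical
  replace hp : (∀ x, 0 ≤ p x) ∧ ∑ x, p x = 1 := hp
  replace hρ : ∀ i, (ρ i).PosSemidef ∧ (ρ i).trace = 1 := hρ
  obtain ⟨hp0, hp1⟩ := hp
  set σ : Matrix (Fin d) (Fin d) ℂ := ∑ i, p i • ρ i with hσdef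
  have hσreal : σ = ∑ i, ((p i : ℂ)) • ρ i := by
    ext k k'
    simp [hσdef, Matrix.sum_apply, Complex.real_smul]
  have hσP : σ.PosSemidef := by
    rw [hσreal]
    exact psd_sum _ (fun i => psd_smul (hρ i).1 (hp0 i))
  have hH : σ.IsHermitian := hσP.1
  set lam : Fin d → ℝ := hH.eigenvalues with hlamdef
  have hlam0 : ∀ k, 0 ≤ lam k := fun k => hσP.eigenvalues_nonneg k
  set μ : (i : Fin m) → Fin d → ℝ := fun i => (hρ i).1.1.eigenvalues with hμdef
  have hμ0 : ∀ i l, 0 ≤ μ i l := fun i l => (hρ i).1.eigenvalues_nonneg l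
  have hμ1 : ∀ i, ∑ l, μ i l = 1 := by
    intro i
    have h2 : (1 : ℂ) = ((∑ l, μ i l : ℝ) : ℂ) := by
      rw [← (hρ i).2, herm_trace (hρ i).1.1]; push_cast; rfl
    exact_mod_cast h2.symm
  set W : Fin m → Matrix (Fin d) (Fin d) ℂ :=
    fun i => star (hH.eigenvectorUnitary : Matrix (Fin d) (Fin d) ℂ) *
      ((hρ i).1.1.eigenvectorUnitary : Matrix (Fin d) (Fin d) ℂ) with hWdef
  have hWmem : ∀ i, W i ∈ Matrix.unitaryGroup (Fin d) ℂ := fun i =>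
    mul_mem (Unitary.star_mem hH.eigenvectorUnitary.2) (hρ i).1.1.eigenvectorUnitary.2
  have hWrow : ∀ i k, ∑ l, Complex.normSq (W i k l) = 1 := by
    intro i k
    have h := Matrix.mem_unitaryGroup_iff.mp (hWmem i)
    have h2 : (W i * star (W i)) k k = (1 : Matrix (Fin d) (Fin d) ℂ) k k := by rw [h]
    simp only [Matrix.mul_apply, Matrix.star_apply, Matrix.one_apply_eq] at h2
    have h3 : ∀ l, W i k l * star (W i k l) = ((Complex.normSq (W i k l) : ℝ) : ℂ) := by
      intro l; exact Complex.mul_conj _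
    rw [Finset.sum_congr rfl (fun l _ => h3 l)] at h2
    exact_mod_cast h2
  have hWcol : ∀ i l, ∑ k, Complex.normSq (W i k l) = 1 := by
    intro i l
    have h := Matrix.mem_unitaryGroup_iff'.mp (hWmem i)
    have h2 : (star (W i) * W i) l l = (1 : Matrix (Fin d) (Fin d) ℂ) l l := by rw [h]
    simp only [Matrix.mul_apply, Matrix.star_apply, Matrix.one_apply_eq] at h2
    have h3 : ∀ k, star (W i k l) * W i k l = ((Complex.normSq (W i k l) : ℝ) : ℂ) := by
      intro k; rw [mul_comm]; exact Complex.mul_conj _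
    rw [Finset.sum_congr rfl (fun k _ => h3 k)] at h2
    exact_mod_cast h2
  have hρspec : ∀ i, star (hH.eigenvectorUnitary : Matrix (Fin d) (Fin d) ℂ) * ρ i *
      (hH.eigenvectorUnitary : Matrix (Fin d) (Fin d) ℂ) =
      W i * Matrix.diagonal (fun l => (μ i l : ℂ)) * star (W i) := by
    intro i
    conv_lhs => rw [(hρ i).1.1.spectral_theorem]
    rw [hWdef]
    have hd : Matrix.diagonal (RCLike.ofReal ∘ (hρ i).1.1.eigenvalues) =
        Matrix.diagonal (fun l => (μ i l : ℂ)) := rfl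
    simp only [Unitary.conjStarAlgAut_apply, Unitary.coe_star, Matrix.star_mul, star_star, hd, Matrix.mul_assoc]
  have hdiag : Matrix.diagonal (fun k => (lam k : ℂ)) =
      ∑ i, (p i : ℂ) • (W i * Matrix.diagonal (fun l => (μ i l : ℂ)) * star (W i)) := by
    have h0 := hH.conjStarAlgAut_star_eigenvectorUnitary
    simp only [Unitary.conjStarAlgAut_apply, Unitary.coe_star, star_star] at h0
    have h1 : Matrix.diagonal (RCLike.ofReal ∘ hH.eigenvalues) =
        Matrix.diagonal (fun k => (lam k : ℂ)) := rfl
    rw [h1] at h0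
    have h2 := congrArg (fun M : Matrix (Fin d) (Fin d) ℂ =>
      star (hH.eigenvectorUnitary : Matrix (Fin d) (Fin d) ℂ) * M *
        (hH.eigenvectorUnitary : Matrix (Fin d) (Fin d) ℂ)) hσreal
    rw [← h0, h2, Matrix.mul_sum, Matrix.sum_mul]
    refine Finset.sum_congr rfl fun i _ => ?_
    rw [Matrix.mul_smul, Matrix.smul_mul, hρspec i]
  have hz0 : ∀ (v : Fin d → ℂ) i l, (starRingEnd ℂ) (∑ k, (starRingEnd ℂ) (W i k l) * v k)
      = ∑ k, W i k l * (starRingEnd ℂ) (v k) := by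
    intro v i l
    rw [map_sum]
    refine Finset.sum_congr rfl fun k _ => ?_
    rw [_root_.map_mul, Complex.conj_conj]
  have e1 : ∀ k k' : Fin d, Matrix.diagonal (fun k => (lam k : ℂ)) k k'
      = ∑ i, ∑ l, (p i : ℂ) * (μ i l : ℂ) * (W i k l * (starRingEnd ℂ) (W i k' l)) := by
    intro k k'
    rw [hdiag, Matrix.sum_apply]
    refine Finset.sum_congr rfl fun i _ => ?_
    rw [Matrix.smul_apply, Matrix.mul_apply, smul_eq_mul, Finset.mul_sum]
    refine Finset.sum_congr rfl fun l _ => ?_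
    rw [Matrix.mul_diagonal, Matrix.star_apply, RCLike.star_def]
    ring
  have hKEY : ∀ v : Fin d → ℂ,
      ∑ k, (lam k : ℂ) * ((starRingEnd ℂ) (v k) * v k)
        = ∑ i, ∑ l, (p i : ℂ) * (μ i l : ℂ) *
            ((starRingEnd ℂ) (∑ k, (starRingEnd ℂ) (W i k l) * v k) *
              (∑ k, (starRingEnd ℂ) (W i k l) * v k)) := by
    intro v
    have step1 : ∑ k, (lam k : ℂ) * ((starRingEnd ℂ) (v k) * v k)
        = ∑ k, ∑ k', (starRingEnd ℂ) (v k) *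
            Matrix.diagonal (fun k => (lam k : ℂ)) k k' * v k' := by
      refine Finset.sum_congr rfl fun k _ => ?_
      rw [Finset.sum_eq_single k]
      · rw [Matrix.diagonal_apply_eq]; ring
      · intro k' _ hne
        rw [Matrix.diagonal_apply_ne _ (Ne.symm hne)]; ring
      · intro h; exact absurd (Finset.mem_univ k) h
    rw [step1]
    have step2 : ∑ k, ∑ k', (starRingEnd ℂ) (v k) *
          Matrix.diagonal (fun k => (lam k : ℂ)) k k' * v k'
        = ∑ k, ∑ k', ∑ i, ∑ l, (p i : ℂ) * (μ i l : ℂ) *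
            ((W i k l * (starRingEnd ℂ) (v k)) * ((starRingEnd ℂ) (W i k' l) * v k')) := by
      refine Finset.sum_congr rfl fun k _ => Finset.sum_congr rfl fun k' _ => ?_
      rw [e1 k k', Finset.mul_sum, Finset.sum_mul]
      refine Finset.sum_congr rfl fun i _ => ?_
      rw [Finset.mul_sum, Finset.sum_mul]
      refine Finset.sum_congr rfl fun l _ => ?_
      ring
    rw [step2, sum4_swap]
    refine Finset.sum_congr rfl fun i _ => Finset.sum_congr rfl fun l _ => ?_
    rw [hz0 v i l, Finset.sum_mul_sum]
    simp only [Finset.mul_sum]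
  -- eigenvalue mixture identity
  have hlameq : ∀ k, lam k = ∑ i, ∑ l, p i * μ i l * Complex.normSq (W i k l) := by
    intro k
    have h := hKEY (fun k'' => if k'' = k then (1:ℂ) else 0)
    have hL : ∑ k', (lam k' : ℂ) * ((starRingEnd ℂ) ((fun k'' => if k'' = k then (1:ℂ) else 0) k') * (fun k'' => if k'' = k then (1:ℂ) else 0) k')
        = (lam k : ℂ) := by
      rw [Finset.sum_eq_single k]
      · simp
      · intro k' _ hne; simp [Pi.single_apply, if_neg hne]
      · intro h; exact absurd (Finset.mem_univ k) h
    have hzz : ∀ i l, (∑ k', (starRingEnd ℂ) (W i k' l) * (fun k'' => if k'' = k then (1:ℂ) else 0) k')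
        = (starRingEnd ℂ) (W i k l) := by
      intro i l
      rw [Finset.sum_eq_single k]
      · simp
      · intro k' _ hne; simp [Pi.single_apply, if_neg hne]
      · intro h; exact absurd (Finset.mem_univ k) h
    rw [hL] at h
    have hR : ∑ i, ∑ l, (p i : ℂ) * (μ i l : ℂ) *
        ((starRingEnd ℂ) (∑ k', (starRingEnd ℂ) (W i k' l) * (fun k'' => if k'' = k then (1:ℂ) else 0) k') *
          (∑ k', (starRingEnd ℂ) (W i k' l) * (fun k'' => if k'' = k then (1:ℂ) else 0) k'))
        = ((∑ i, ∑ l, p i * μ i l * Complex.normSq (W i k l) : ℝ) : ℂ) := by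
      push_cast
      refine Finset.sum_congr rfl fun i _ => Finset.sum_congr rfl fun l _ => ?_
      rw [hzz i l, Complex.conj_conj]
      rw [show W i k l * (starRingEnd ℂ) (W i k l) = ((Complex.normSq (W i k l) : ℝ) : ℂ) from
        Complex.mul_conj _]
      try ring
    rw [hR] at h
    exact_mod_cast h
  have hq0 : ∀ i l, 0 ≤ p i * μ i l := fun i l => mul_nonneg (hp0 i) (hμ0 i l)
  have hterm_le : ∀ i l k, p i * μ i l * Complex.normSq (W i k l) ≤ lam k := by
    intro i l k
    rw [hlameq k]
    have h1 : p i * μ i l * Complex.normSq (W i k l)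
        ≤ ∑ l', p i * μ i l' * Complex.normSq (W i k l') :=
      Finset.single_le_sum (fun l' _ => mul_nonneg (hq0 i l') (Complex.normSq_nonneg _))
        (Finset.mem_univ l)
    refine h1.trans (Finset.single_le_sum
      (f := fun i' => ∑ l', p i' * μ i' l' * Complex.normSq (W i' k l')) (fun i' _ => ?_)
      (Finset.mem_univ i))
    exact Finset.sum_nonneg fun l' _ => mul_nonneg (hq0 i' l') (Complex.normSq_nonneg _)
  -- fact (c) : subnormalization of the Jensen weights
  have hc : ∀ i l, p i * μ i l *
      (∑ k, if 0 < lam k then Complex.normSq (W i k l) / lam k else 0) ≤ 1 := by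
    intro i l
    set s : ℝ := ∑ k, if 0 < lam k then Complex.normSq (W i k l) / lam k else 0 with hsdef
    have hs0 : 0 ≤ s := Finset.sum_nonneg fun k _ => by
      by_cases hlt : 0 < lam k
      · rw [if_pos hlt]; exact div_nonneg (Complex.normSq_nonneg _) hlt.le
      · rw [if_neg hlt]
    set v : Fin d → ℂ := fun k => if 0 < lam k then (W i k l / ((lam k : ℝ) : ℂ)) else 0 with hvdef
    have h := hKEY v
    have hL : ∑ k, (lam k : ℂ) * ((starRingEnd ℂ) (v k) * v k) = ((s : ℝ) : ℂ) := by
      rw [hsdef, Complex.ofReal_sum]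
      refine Finset.sum_congr rfl fun k _ => ?_
      by_cases hlt : 0 < lam k
      · have hne : ((lam k : ℝ) : ℂ) ≠ 0 := by exact_mod_cast ne_of_gt hlt
        simp only [hvdef, if_pos hlt]
        rw [map_div₀, Complex.conj_ofReal]
        rw [show (starRingEnd ℂ) (W i k l) / ((lam k : ℝ):ℂ) * (W i k l / ((lam k : ℝ):ℂ))
            = ((Complex.normSq (W i k l) : ℝ) : ℂ) / (((lam k : ℝ):ℂ) * ((lam k : ℝ):ℂ)) from by
          rw [div_mul_div_comm, mul_comm ((starRingEnd ℂ) (W i k l)), Complex.mul_conj]]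
        rw [Complex.ofReal_div]
        field_simp
      · simp only [hvdef, if_neg hlt]
        simp
    rw [hL] at h
    -- identify z for index (i,l)
    have hz : (∑ k, (starRingEnd ℂ) (W i k l) * v k) = ((s : ℝ) : ℂ) := by
      rw [hsdef, Complex.ofReal_sum]
      refine Finset.sum_congr rfl fun k _ => ?_
      by_cases hlt : 0 < lam k
      · have hne : ((lam k : ℝ) : ℂ) ≠ 0 := by exact_mod_cast ne_of_gt hlt
        simp only [hvdef, if_pos hlt]
        rw [mul_div_assoc', mul_comm ((starRingEnd ℂ) (W i k l)), Complex.mul_conj]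
        rw [Complex.ofReal_div]
      · simp only [hvdef, if_neg hlt]
        simp
    have hR : ∑ i', ∑ l', (p i' : ℂ) * (μ i' l' : ℂ) *
        ((starRingEnd ℂ) (∑ k, (starRingEnd ℂ) (W i' k l') * v k) *
          (∑ k, (starRingEnd ℂ) (W i' k l') * v k))
        = ((∑ i', ∑ l', p i' * μ i' l' * Complex.normSq (∑ k, (starRingEnd ℂ) (W i' k l') * v k) : ℝ) : ℂ) := by
      push_cast
      refine Finset.sum_congr rfl fun i' _ => Finset.sum_congr rfl fun l' _ => ?_
      rw [show (starRingEnd ℂ) (∑ k, (starRingEnd ℂ) (W i' k l') * v k) *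
          (∑ k, (starRingEnd ℂ) (W i' k l') * v k)
          = ((Complex.normSq (∑ k, (starRingEnd ℂ) (W i' k l') * v k) : ℝ) : ℂ) from by
        rw [mul_comm]; exact Complex.mul_conj _]
      try ring
    rw [hR] at h
    have hreal : s = ∑ i', ∑ l', p i' * μ i' l' *
        Complex.normSq (∑ k, (starRingEnd ℂ) (W i' k l') * v k) := by exact_mod_cast h
    have hsingle : p i * μ i l * Complex.normSq (∑ k, (starRingEnd ℂ) (W i k l) * v k) ≤ s := by
      rw [hreal]
      have h1 := Finset.single_le_sum
        (f := fun l' => p i * μ i l' * Complex.normSq (∑ k, (starRingEnd ℂ) (W i k l') * v k))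
        (fun l' _ => mul_nonneg (hq0 i l') (Complex.normSq_nonneg _)) (Finset.mem_univ l)
      refine h1.trans (Finset.single_le_sum
        (f := fun i' => ∑ l', p i' * μ i' l' *
          Complex.normSq (∑ k, (starRingEnd ℂ) (W i' k l') * v k)) (fun i' _ => ?_)
        (Finset.mem_univ i))
      exact Finset.sum_nonneg fun l' _ => mul_nonneg (hq0 i' l') (Complex.normSq_nonneg _)
    rw [hz, Complex.normSq_ofReal] at hsingle
    nlinarith [hq0 i l, hs0, mul_nonneg (hq0 i l) hs0]
  -- entropy unfoldings
  have hvnσ : vnEntropy σ = ∑ k, Real.negMulLog (lam k) := by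
    simp only [vnEntropy]
    rw [dif_pos hH]
  have hvnρ : ∀ i, vnEntropy (ρ i) = ∑ l, Real.negMulLog (μ i l) := by
    intro i
    simp only [vnEntropy]
    rw [dif_pos (hρ i).1.1]
  constructor
  · -- lower bound : concavity
    rw [hvnσ]
    have step1 : ∀ i, vnEntropy (ρ i)
        ≤ ∑ k, Real.negMulLog (∑ l, Complex.normSq (W i k l) * μ i l) := by
      intro i
      rw [hvnρ i]
      calc ∑ l, Real.negMulLog (μ i l)
          = ∑ l, (∑ k, Complex.normSq (W i k l)) * Real.negMulLog (μ i l) := by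
            refine Finset.sum_congr rfl fun l _ => ?_
            rw [hWcol i l, one_mul]
        _ = ∑ k, ∑ l, Complex.normSq (W i k l) * Real.negMulLog (μ i l) := by
            rw [← Finset.sum_comm]
            exact Finset.sum_congr rfl fun l _ => Finset.sum_mul _ _ _
        _ ≤ ∑ k, Real.negMulLog (∑ l, Complex.normSq (W i k l) * μ i l) :=
            Finset.sum_le_sum fun k _ => jensen_nml _ _
              (fun l => Complex.normSq_nonneg _) (le_of_eq (hWrow i k)) (fun l => hμ0 i l)
    calc ∑ i, p i * vnEntropy (ρ i)
        ≤ ∑ i, p i * ∑ k, Real.negMulLog (∑ l, Complex.normSq (W i k l) * μ i l) :=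
          Finset.sum_le_sum fun i _ => mul_le_mul_of_nonneg_left (step1 i) (hp0 i)
      _ = ∑ k, ∑ i, p i * Real.negMulLog (∑ l, Complex.normSq (W i k l) * μ i l) := by
          rw [← Finset.sum_comm]
          exact Finset.sum_congr rfl fun i _ => Finset.mul_sum _ _ _
      _ ≤ ∑ k, Real.negMulLog (∑ i, p i * ∑ l, Complex.normSq (W i k l) * μ i l) :=
          Finset.sum_le_sum fun k _ => jensen_nml p _ hp0 (le_of_eq hp1)
            (fun i => Finset.sum_nonneg fun l _ =>
              mul_nonneg (Complex.normSq_nonneg _) (hμ0 i l))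
      _ = ∑ k, Real.negMulLog (lam k) := by
          refine Finset.sum_congr rfl fun k _ => ?_
          congr 1
          rw [hlameq k]
          refine Finset.sum_congr rfl fun i _ => ?_
          rw [Finset.mul_sum]
          refine Finset.sum_congr rfl fun l _ => ?_
          ring
  · -- upper bound
    rw [hvnσ]
    have hBsum : ∀ i l, ∑ k, (if 0 < lam k then p i * μ i l * Complex.normSq (W i k l) / lam k
        else 0) ≤ 1 := by
      intro i l
      have he : ∀ k, (if 0 < lam k then p i * μ i l * Complex.normSq (W i k l) / lam k else 0)
          = p i * μ i l * (if 0 < lam k then Complex.normSq (W i k l) / lam k else 0) := by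
        intro k
        by_cases hlt : 0 < lam k
        · rw [if_pos hlt, if_pos hlt, mul_div_assoc]
        · rw [if_neg hlt, if_neg hlt, mul_zero]
      rw [Finset.sum_congr rfl fun k _ => he k, ← Finset.mul_sum]
      exact hc i l
    have hB0 : ∀ i l k, 0 ≤ (if 0 < lam k then p i * μ i l * Complex.normSq (W i k l) / lam k
        else 0) := by
      intro i l k
      by_cases hlt : 0 < lam k
      · rw [if_pos hlt]
        exact div_nonneg (mul_nonneg (hq0 i l) (Complex.normSq_nonneg _)) hlt.le
      · rw [if_neg hlt]
    have hBlam : ∀ i l, ∑ k, (if 0 < lam k then p i * μ i l * Complex.normSq (W i k l) / lam k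
        else 0) * lam k = p i * μ i l := by
      intro i l
      have he : ∀ k, (if 0 < lam k then p i * μ i l * Complex.normSq (W i k l) / lam k else 0)
          * lam k = p i * μ i l * Complex.normSq (W i k l) := by
        intro k
        by_cases hlt : 0 < lam k
        · rw [if_pos hlt, div_mul_cancel₀ _ (ne_of_gt hlt)]
        · rw [if_neg hlt, zero_mul]
          have h0 : lam k = 0 := le_antisymm (not_lt.mp hlt) (hlam0 k)
          have h1 := hterm_le i l k
          rw [h0] at h1
          have h2 := mul_nonneg (hq0 i l) (Complex.normSq_nonneg (W i k l))
          linarith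
      rw [Finset.sum_congr rfl fun k _ => he k, ← Finset.mul_sum, hWcol i l, mul_one]
    calc ∑ k, Real.negMulLog (lam k)
        = ∑ k, ∑ i, ∑ l, (if 0 < lam k then p i * μ i l * Complex.normSq (W i k l) / lam k
            else 0) * Real.negMulLog (lam k) := by
          refine Finset.sum_congr rfl fun k _ => ?_
          by_cases hlt : 0 < lam k
          · have hs1 : ∑ i, ∑ l, (if 0 < lam k then p i * μ i l * Complex.normSq (W i k l) / lam k
                else 0) = 1 := by
              simp only [if_pos hlt]
              simp only [← Finset.sum_div]
              rw [← hlameq k, div_self (ne_of_gt hlt)]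
            simp only [← Finset.sum_mul]
            rw [hs1, one_mul]
          · have h0 : lam k = 0 := le_antisymm (not_lt.mp hlt) (hlam0 k)
            simp only [if_neg hlt, zero_mul, Finset.sum_const_zero]
            rw [h0, Real.negMulLog_zero]
      _ = ∑ i, ∑ l, ∑ k, (if 0 < lam k then p i * μ i l * Complex.normSq (W i k l) / lam k
            else 0) * Real.negMulLog (lam k) := by
          rw [Finset.sum_comm]
          exact Finset.sum_congr rfl fun i _ => Finset.sum_comm
      _ ≤ ∑ i, ∑ l, Real.negMulLog (∑ k, (if 0 < lam k then
            p i * μ i l * Complex.normSq (W i k l) / lam k else 0) * lam k) :=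
          Finset.sum_le_sum fun i _ => Finset.sum_le_sum fun l _ =>
            jensen_nml _ _ (fun k => hB0 i l k) (hBsum i l) (fun k => hlam0 k)
      _ = ∑ i, ∑ l, Real.negMulLog (p i * μ i l) := by
          refine Finset.sum_congr rfl fun i _ => Finset.sum_congr rfl fun l _ => ?_
          rw [hBlam i l]
      _ = ∑ i, p i * vnEntropy (ρ i) + shannonEntropy p := by
          rw [shannonEntropy, ← Finset.sum_add_distrib]
          refine Finset.sum_congr rfl fun i _ => ?_
          rw [hvnρ i]
          calc ∑ l, Real.negMulLog (p i * μ i l)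
              = ∑ l, (μ i l * Real.negMulLog (p i) + p i * Real.negMulLog (μ i l)) :=
                Finset.sum_congr rfl fun l _ => Real.negMulLog_mul _ _
            _ = (∑ l, μ i l) * Real.negMulLog (p i) + p i * ∑ l, Real.negMulLog (μ i l) := by
                rw [Finset.sum_add_distrib, Finset.sum_mul, Finset.mul_sum]
            _ = p i * ∑ l, Real.negMulLog (μ i l) + Real.negMulLog (p i) := by
                rw [hμ1 i, one_mul]
                ring
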